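/- For all integers n ≥ 2 and k ≥ 1, the total variation distance between the k-riffle shuffle measure and the cut-then-k-riffle-shuffle measure satisfies ||R_{k,n} − C_{k,n}|| = (1/(k^n·n)) · Σ_{j=1}^{n−1} j·(n−j)·A_{n−1,j}·binom(n+k−j−1, n−1). -/

import Mathlib

/-- Number of descents of a permutation of `{1,...,n}` (here `Fin n`, 0-indexed):
the number of positions `i` with `1 ≤ i ≤ n-1` and `π(i) > π(i+1)`. -/
def numDescents (n : ℕ) (π : Equiv.Perm (Fin n)) : ℕ :=
  ((Finset.range (n - 1)).filter (fun i =>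
    ∃ h : i + 1 < n, π ⟨i + 1, h⟩ < π ⟨i, Nat.lt_of_succ_lt h⟩)).card

/-- `π` has a cyclic descent at `n` if `π(n) > π(1)`. -/
def hasCyclicDescentAtLast (n : ℕ) (π : Equiv.Perm (Fin n)) : Prop :=
  ∃ h : 0 < n, π ⟨0, h⟩ < π ⟨n - 1, Nat.sub_lt h Nat.one_pos⟩

instance (n : ℕ) (π : Equiv.Perm (Fin n)) : Decidable (hasCyclicDescentAtLast n π) :=
  exists_prop_decidable _

/-- Number of cyclic descents: `d(π)+1` if `π` has a cyclic descent at `n`, else `d(π)`. -/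
def numCyclicDescents (n : ℕ) (π : Equiv.Perm (Fin n)) : ℕ :=
  numDescents n π + if hasCyclicDescentAtLast n π then 1 else 0

/-- The k-riffle shuffle measure `R_{k,n}(π) = binom(n+k-d(π)-1, n) / k^n`. -/
noncomputable def riffle (k n : ℕ) (π : Equiv.Perm (Fin n)) : ℝ :=
  (Nat.choose (n + k - numDescents n π - 1) n : ℝ) / (k : ℝ) ^ n

/-- The cut-then-k-riffle-shuffle measure
`C_{k,n}(π) = binom(n+k-cd(π)-1, n-1) / (n·k^(n-1))`. -/
noncomputable def cutRiffle (k n : ℕ) (π : Equiv.Perm (Fin n)) : ℝ :=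
  (Nat.choose (n + k - numCyclicDescents n π - 1) (n - 1) : ℝ) / ((n : ℝ) * (k : ℝ) ^ (n - 1))

/-- Eulerian number `A_{m,j}`: the number of permutations of `m` symbols with `j-1` descents. -/
def eulerianA (m j : ℕ) : ℕ :=
  (Finset.univ.filter (fun π : Equiv.Perm (Fin m) => numDescents m π = j - 1)).card

/-- set of cyclic descent positions -/
def cycDescSet (m : ℕ) (π : Equiv.Perm (Fin (m+1))) : Finset (Fin (m+1)) :=
  Finset.univ.filter (fun i => π (i + 1) < π i)

lemma hasCyc_iff (m : ℕ) (π : Equiv.Perm (Fin (m+1))) :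
    hasCyclicDescentAtLast (m+1) π ↔ π 0 < π (Fin.last m) := by
  constructor
  · rintro ⟨h, hlt⟩; exact hlt
  · intro h; exact ⟨Nat.succ_pos m, h⟩

lemma numDescents_le (m : ℕ) (π : Equiv.Perm (Fin (m+1))) : numDescents (m+1) π ≤ m := by
  classical
  calc numDescents (m+1) π ≤ (Finset.range (m+1-1)).card := Finset.card_filter_le _ _
  _ = m := by simp

lemma numDescents_le' (m : ℕ) (σ : Equiv.Perm (Fin m)) : numDescents m σ ≤ m - 1 := by
  calc numDescents m σ ≤ (Finset.range (m-1)).card := Finset.card_filter_le _ _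
  _ = m - 1 := by simp

lemma card_cycDescSet (m : ℕ) (π : Equiv.Perm (Fin (m+1))) :
    (cycDescSet m π).card = numCyclicDescents (m+1) π := by
  classical
  have hcard : (cycDescSet m π).card
      = ∑ i : Fin (m+1), (if π (i + 1) < π i then 1 else 0) := by
    rw [cycDescSet, Finset.card_filter]
  rw [hcard, Fin.sum_univ_castSucc]
  have hlast : (Fin.last m) + 1 = 0 := Fin.last_add_one m
  have h2 : (if π ((Fin.last m) + 1) < π (Fin.last m) then (1:ℕ) else 0)
      = (if hasCyclicDescentAtLast (m+1) π then 1 else 0) := by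
    rw [hlast]
    congr 1
    rw [eq_iff_iff, hasCyc_iff]
  rw [h2, numCyclicDescents]
  congr 1
  -- sum over castSucc equals numDescents
  set f : ℕ → ℕ := fun i =>
    if h : i + 1 < m + 1 then
      (if π ⟨i + 1, h⟩ < π ⟨i, Nat.lt_of_succ_lt h⟩ then 1 else 0) else 0 with hf
  have h3 : ∀ i : Fin m,
      (if π ((Fin.castSucc i) + 1) < π (Fin.castSucc i) then (1:ℕ) else 0) = f i.val := by
    intro i
    have hi : (i : ℕ) + 1 < m + 1 := by omega
    rw [hf]
    dsimp only
    rw [dif_pos hi]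
    have e1 : (Fin.castSucc i) + 1 = (⟨i.val + 1, hi⟩ : Fin (m+1)) := by
      apply Fin.ext
      simp [Fin.add_def, Nat.mod_eq_of_lt hi]
    have e2 : Fin.castSucc i = (⟨i.val, Nat.lt_of_succ_lt hi⟩ : Fin (m+1)) := rfl
    rw [e1, e2]
  rw [Finset.sum_congr rfl (fun i _ => h3 i), Fin.sum_univ_eq_sum_range f m]
  rw [numDescents, Finset.card_filter]
  apply Finset.sum_congr
  · simp
  · intro i hi
    rw [Finset.mem_range] at hi
    have hi1 : i + 1 < m + 1 := by omega
    rw [hf]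
    dsimp only
    rw [dif_pos hi1]
    congr 1
    rw [eq_iff_iff]
    constructor
    · intro h; exact ⟨hi1, h⟩
    · rintro ⟨h, hlt⟩; exact hlt


/-- rotation by t -/
def rotP (m : ℕ) (t : Fin (m+1)) : Equiv.Perm (Fin (m+1)) := Equiv.addRight t

lemma rotP_apply (m : ℕ) (t x : Fin (m+1)) : rotP m t x = x + t := rfl

lemma card_cycDescSet_rot (m : ℕ) (π : Equiv.Perm (Fin (m+1))) (t : Fin (m+1)) :
    (cycDescSet m (π * rotP m t)).card = (cycDescSet m π).card := by
  classical
  apply Finset.card_nbij (fun i => i + t)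
  · intro i hi
    rw [Finset.mem_coe, cycDescSet, Finset.mem_filter] at hi ⊢
    simp only [cycDescSet, Finset.mem_filter, Finset.mem_univ, true_and,
      Equiv.Perm.mul_apply, rotP_apply] at hi ⊢
    have : i + 1 + t = i + t + 1 := by abel
    rwa [this] at hi
  · intro a _ b _ hab
    simpa using add_right_cancel hab
  · intro a ha
    simp only [Finset.coe_filter, Set.mem_setOf_eq, cycDescSet, Finset.mem_univ, true_and] at ha
    refine ⟨a - t, ?_, by abel⟩
    rw [Finset.mem_coe, cycDescSet, Finset.mem_filter]
    simp only [cycDescSet, Finset.mem_coe, Finset.mem_filter, Finset.mem_univ, true_and,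
      Equiv.Perm.mul_apply, rotP_apply]
    have e1 : a - t + 1 + t = a + 1 := by abel
    have e2 : a - t + t = a := by abel
    rw [e1, e2]
    exact ha

lemma numCyclicDescents_rot (m : ℕ) (π : Equiv.Perm (Fin (m+1))) (t : Fin (m+1)) :
    numCyclicDescents (m+1) (π * rotP m t) = numCyclicDescents (m+1) π := by
  rw [← card_cycDescSet, ← card_cycDescSet, card_cycDescSet_rot]

lemma hasCyc_rot_iff (m : ℕ) (π : Equiv.Perm (Fin (m+1))) (t : Fin (m+1)) :
    hasCyclicDescentAtLast (m+1) (π * rotP m t) ↔ (t - 1) ∈ cycDescSet m π := by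
  rw [hasCyc_iff]
  simp only [cycDescSet, Finset.mem_filter, Finset.mem_univ, true_and,
    Equiv.Perm.mul_apply, rotP_apply]
  have hlast : Fin.last m = -1 :=
    eq_neg_of_add_eq_zero_left (Fin.last_add_one m)
  rw [hlast]
  have e1 : (0 : Fin (m+1)) + t = t := by abel
  have e2 : (-1 : Fin (m+1)) + t = t - 1 := by abel
  have e3 : t - 1 + 1 = t := by abel
  rw [e1, e2, e3]


lemma numCyclicDescents_le (m : ℕ) (π : Equiv.Perm (Fin (m+1))) :
    numCyclicDescents (m+1) π ≤ m + 1 := by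
  have := numDescents_le m π
  rw [numCyclicDescents]
  split <;> omega

lemma sum_rot_ite (m : ℕ) (π : Equiv.Perm (Fin (m+1))) (a b : ℝ) :
    ∑ t : Fin (m+1), (if hasCyclicDescentAtLast (m+1) (π * rotP m t) then a else b)
      = (numCyclicDescents (m+1) π : ℝ) * a
        + ((m+1 : ℝ) - (numCyclicDescents (m+1) π : ℝ)) * b := by
  classical
  have step1 : ∑ t : Fin (m+1), (if hasCyclicDescentAtLast (m+1) (π * rotP m t) then a else b)
      = ∑ t : Fin (m+1), (if (t - 1) ∈ cycDescSet m π then a else b) := by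
    apply Finset.sum_congr rfl
    intro t _
    rw [if_congr (hasCyc_rot_iff m π t) rfl rfl]
  have step2 : ∑ t : Fin (m+1), (if (t - 1) ∈ cycDescSet m π then a else b)
      = ∑ t : Fin (m+1), (if t ∈ cycDescSet m π then a else b) := by
    apply Fintype.sum_equiv (Equiv.subRight (1 : Fin (m+1)))
    intro x
    simp [Equiv.subRight]
    exact if_congr Iff.rfl rfl rfl
  rw [step1, step2, Finset.sum_ite, Finset.sum_const, Finset.sum_const]
  have h1 : (Finset.univ.filter (fun t => t ∈ cycDescSet m π)) = cycDescSet m π := by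
    simp
  have h2 : (Finset.univ.filter (fun t => t ∉ cycDescSet m π)) = (cycDescSet m π)ᶜ := by
    ext x; simp
  rw [h1, h2, Finset.card_compl, card_cycDescSet]
  have hle := numCyclicDescents_le m π
  have hc : (Fintype.card (Fin (m+1))) = m + 1 := by simp
  rw [hc]
  have hle' : numCyclicDescents (m + 1) π ≤ 1 + m := by omega
  rw [nsmul_eq_mul, nsmul_eq_mul, Nat.cast_sub hle]
  push_cast
  ring



lemma pascal' (M m : ℕ) (hm : 1 ≤ m) :
    (M+1).choose m = M.choose (m-1) + M.choose m := by
  obtain ⟨m', rfl⟩ : ∃ m', m = m'+1 := ⟨m-1, by omega⟩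
  simp [Nat.choose_succ_succ]

lemma chooseRight' (M m : ℕ) (hm : 1 ≤ m) :
    M.choose m * m = M.choose (m-1) * (M - (m-1)) := by
  obtain ⟨m', rfl⟩ : ∃ m', m = m'+1 := ⟨m-1, by omega⟩
  simpa using Nat.choose_succ_right_eq M m'

set_option maxHeartbeats 1000000 in
lemma abs_diff_eq (m k : ℕ) (hm : 1 ≤ m) (hk : 1 ≤ k) (π : Equiv.Perm (Fin (m+1))) :
    |riffle k (m+1) π - cutRiffle k (m+1) π|
      = (if hasCyclicDescentAtLast (m+1) π
            then ((m+1 : ℝ) - (numCyclicDescents (m+1) π : ℝ))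
            else (numCyclicDescents (m+1) π : ℝ))
        * (Nat.choose (m+1+k - numCyclicDescents (m+1) π - 1) m : ℝ)
        / (((m:ℝ)+1) * (k : ℝ) ^ (m+1)) := by
  classical
  have hd : numDescents (m+1) π ≤ m := numDescents_le m π
  have hK0 : (k:ℝ) ≠ 0 := by positivity
  have hm1 : ((m:ℝ)+1) ≠ 0 := by positivity
  rw [riffle, cutRiffle]
  simp only [Nat.add_sub_cancel]
  rw [show (((m+1 : ℕ)) : ℝ) = (m:ℝ)+1 from by push_cast; ring]
  by_cases hcyc : hasCyclicDescentAtLast (m+1) π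
  · -- wrap case: j = d + 1
    rw [if_pos hcyc]
    have hj : numCyclicDescents (m+1) π = numDescents (m+1) π + 1 := by
      rw [numCyclicDescents, if_pos hcyc]
    set d := numDescents (m+1) π with hdd
    set j := numCyclicDescents (m+1) π with hjj
    have hjm : j ≤ m + 1 := by omega
    by_cases hjk : j ≤ k
    · set M := m + 1 + k - j - 1 with hM
      have hch : m + 1 + k - d - 1 = M + 1 := by omega
      rw [hch]
      have id1 : (M+1).choose (m+1) * (m+1) = (M+1).choose m * (k - j + 1) := by
        rw [Nat.choose_succ_right_eq]
        congr 1
        omega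
      have id2 : (M+1).choose m = M.choose (m-1) + M.choose m := pascal' M m hm
      have id3 : M.choose m * m = M.choose (m-1) * (k - j + 1) := by
        rw [chooseRight' M m hm]
        congr 1
        omega
      have c1 : ((M+1).choose (m+1) : ℝ) * ((m:ℝ)+1)
          = ((M+1).choose m : ℝ) * ((k:ℝ) - (j:ℝ) + 1) := by
        have h := congrArg (Nat.cast : ℕ → ℝ) id1
        have hsub : ((k - j : ℕ) : ℝ) = (k:ℝ) - (j:ℝ) := Nat.cast_sub hjk
        push_cast [hsub] at h
        linarith [h]
      have c2 : (((M+1).choose m : ℕ) : ℝ) = (M.choose (m-1) : ℝ) + (M.choose m : ℝ) := by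
        exact_mod_cast congrArg (Nat.cast : ℕ → ℝ) id2
      have c3 : (M.choose m : ℝ) * (m:ℝ) = (M.choose (m-1) : ℝ) * ((k:ℝ) - (j:ℝ) + 1) := by
        have h := congrArg (Nat.cast : ℕ → ℝ) id3
        have hsub : ((k - j : ℕ) : ℝ) = (k:ℝ) - (j:ℝ) := Nat.cast_sub hjk
        push_cast [hsub] at h
        linarith [h]
      have key : ((M+1).choose (m+1) : ℝ) * ((m:ℝ)+1)
          = ((k:ℝ) + (m:ℝ) + 1 - (j:ℝ)) * (M.choose m : ℝ) := by
        rw [c1, c2]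
        nlinarith [c3]
      have hjm' : (j:ℝ) ≤ (m:ℝ) + 1 := by exact_mod_cast hjm
      have expand : ((M+1).choose (m+1) : ℝ) / (k:ℝ)^(m+1)
            - (M.choose m : ℝ) / (((m:ℝ)+1) * (k:ℝ)^m)
          = (((m:ℝ)+1) * ((M+1).choose (m+1) : ℝ) - (k:ℝ) * (M.choose m : ℝ))
            / (((m:ℝ)+1) * (k:ℝ)^(m+1)) := by
        field_simp
        ring
      rw [expand]
      have hval : ((m:ℝ)+1) * ((M+1).choose (m+1) : ℝ) - (k:ℝ) * (M.choose m : ℝ)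
          = ((m:ℝ) + 1 - (j:ℝ)) * (M.choose m : ℝ) := by
        linear_combination key
      rw [hval]
      have hnn : (0:ℝ) ≤ ((m:ℝ)+1-(j:ℝ)) * (M.choose m : ℝ) / (((m:ℝ)+1) * (k:ℝ)^(m+1)) := by
        apply div_nonneg
        · apply mul_nonneg
          · linarith
          · positivity
        · positivity
      rw [abs_of_nonneg hnn]
    · -- j > k : everything is zero
      have h1 : (m + 1 + k - d - 1).choose (m+1) = 0 := by
        apply Nat.choose_eq_zero_of_lt
        omega
      have h2 : (m + 1 + k - j - 1).choose m = 0 := by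
        apply Nat.choose_eq_zero_of_lt
        omega
      rw [h1, h2]
      simp
  · -- no wrap: j = d
    rw [if_neg hcyc]
    have hj : numCyclicDescents (m+1) π = numDescents (m+1) π := by
      rw [numCyclicDescents, if_neg hcyc, Nat.add_zero]
    rw [hj]
    set d := numDescents (m+1) π with hdd
    by_cases hdk : d ≤ k
    · set M := m + 1 + k - d - 1 with hM
      have id1 : M.choose (m+1) * (m+1) = M.choose m * (k - d) := by
        rw [Nat.choose_succ_right_eq]
        congr 1
        omega
      have c1 : (M.choose (m+1) : ℝ) * ((m:ℝ)+1)
          = (M.choose m : ℝ) * ((k:ℝ) - (d:ℝ)) := by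
        have h := congrArg (Nat.cast : ℕ → ℝ) id1
        have hsub : ((k - d : ℕ) : ℝ) = (k:ℝ) - (d:ℝ) := Nat.cast_sub hdk
        push_cast [hsub] at h
        linarith [h]
      have expand : (M.choose (m+1) : ℝ) / (k:ℝ)^(m+1)
            - (M.choose m : ℝ) / (((m:ℝ)+1) * (k:ℝ)^m)
          = (((m:ℝ)+1) * (M.choose (m+1) : ℝ) - (k:ℝ) * (M.choose m : ℝ))
            / (((m:ℝ)+1) * (k:ℝ)^(m+1)) := by
        field_simp
        ring
      rw [expand]
      have hval : ((m:ℝ)+1) * (M.choose (m+1) : ℝ) - (k:ℝ) * (M.choose m : ℝ)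
          = -((d:ℝ) * (M.choose m : ℝ)) := by
        linear_combination c1
      rw [hval, neg_div, abs_neg, abs_of_nonneg (by positivity)]
    · have h1 : (m + 1 + k - d - 1).choose (m+1) = 0 := by
        apply Nat.choose_eq_zero_of_lt
        omega
      have h2 : (m + 1 + k - d - 1).choose m = 0 := by
        apply Nat.choose_eq_zero_of_lt
        omega
      rw [h1, h2]
      simp


def extLast (m : ℕ) (σ : Equiv.Perm (Fin m)) : Equiv.Perm (Fin (m+1)) where
  toFun := Fin.lastCases (Fin.last m) (fun i => (σ i).castSucc)
  invFun := Fin.lastCases (Fin.last m) (fun i => (σ⁻¹ i).castSucc)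
  left_inv := by
    intro x
    induction x using Fin.lastCases with
    | last => simp
    | cast i => simp
  right_inv := by
    intro x
    induction x using Fin.lastCases with
    | last => simp
    | cast i => simp

lemma extLast_castSucc (m : ℕ) (σ : Equiv.Perm (Fin m)) (i : Fin m) :
    extLast m σ (Fin.castSucc i) = Fin.castSucc (σ i) := by
  simp [extLast]

lemma extLast_last (m : ℕ) (σ : Equiv.Perm (Fin m)) :
    extLast m σ (Fin.last m) = Fin.last m := by
  simp [extLast]

lemma hasCyc_extLast (m : ℕ) (hm : 1 ≤ m) (σ : Equiv.Perm (Fin m)) :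
    hasCyclicDescentAtLast (m+1) (extLast m σ) := by
  rw [hasCyc_iff, extLast_last]
  have h0 : (0 : Fin (m+1)) = Fin.castSucc (⟨0, hm⟩ : Fin m) := by
    apply Fin.ext
    simp
  rw [h0, extLast_castSucc]
  exact Fin.castSucc_lt_last _

lemma numDescents_extLast (m : ℕ) (hm : 1 ≤ m) (σ : Equiv.Perm (Fin m)) :
    numDescents (m+1) (extLast m σ) = numDescents m σ := by
  classical
  rw [numDescents, numDescents]
  congr 1
  ext i
  simp only [Finset.mem_filter, Finset.mem_range, Nat.add_sub_cancel]
  constructor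
  · rintro ⟨hi, h1, hlt⟩
    by_cases he : i + 1 = m
    · exfalso
      have : (⟨i + 1, h1⟩ : Fin (m+1)) = Fin.last m := by
        apply Fin.ext; simp [he]
      rw [this, extLast_last] at hlt
      exact absurd (Fin.le_last _) (not_le.mpr hlt)
    · have h2 : i + 1 < m := by omega
      refine ⟨by omega, h2, ?_⟩
      have e1 : (⟨i + 1, h1⟩ : Fin (m+1)) = Fin.castSucc (⟨i+1, h2⟩ : Fin m) := rfl
      have e2 : (⟨i, Nat.lt_of_succ_lt h1⟩ : Fin (m+1))
          = Fin.castSucc (⟨i, Nat.lt_of_succ_lt h2⟩ : Fin m) := rfl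
      rw [e1, e2, extLast_castSucc, extLast_castSucc, Fin.castSucc_lt_castSucc_iff] at hlt
      exact hlt
  · rintro ⟨hi, h2, hlt⟩
    have h1 : i + 1 < m + 1 := by omega
    refine ⟨by omega, h1, ?_⟩
    have e1 : (⟨i + 1, h1⟩ : Fin (m+1)) = Fin.castSucc (⟨i+1, h2⟩ : Fin m) := rfl
    have e2 : (⟨i, Nat.lt_of_succ_lt h1⟩ : Fin (m+1))
        = Fin.castSucc (⟨i, Nat.lt_of_succ_lt h2⟩ : Fin m) := rfl
    rw [e1, e2, extLast_castSucc, extLast_castSucc, Fin.castSucc_lt_castSucc_iff]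
    exact hlt

lemma numCyclicDescents_extLast (m : ℕ) (hm : 1 ≤ m) (σ : Equiv.Perm (Fin m)) :
    numCyclicDescents (m+1) (extLast m σ) = numDescents m σ + 1 := by
  rw [numCyclicDescents, if_pos (hasCyc_extLast m hm σ), numDescents_extLast m hm σ]

lemma ext_rot_bijective (m : ℕ) :
    Function.Bijective (fun p : Equiv.Perm (Fin m) × Fin (m+1) =>
      extLast m p.1 * rotP m p.2) := by
  rw [Fintype.bijective_iff_injective_and_card]
  constructor
  · rintro ⟨σ₁, t₁⟩ ⟨σ₂, t₂⟩ hEq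
    simp only at hEq
    have ht : t₁ = t₂ := by
      have h1 : (extLast m σ₁ * rotP m t₁) (Fin.last m - t₁) = Fin.last m := by
        simp [Equiv.Perm.mul_apply, rotP_apply, sub_add_cancel, extLast_last]
      rw [hEq] at h1
      simp only [Equiv.Perm.mul_apply, rotP_apply] at h1
      have h2 : extLast m σ₂ (Fin.last m) = Fin.last m := extLast_last m σ₂
      have h3 : Fin.last m - t₁ + t₂ = Fin.last m := by
        apply (extLast m σ₂).injective
        rw [h1, h2]
      rw [sub_add_eq_add_sub, sub_eq_iff_eq_add, add_left_cancel_iff] at h3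
      exact h3.symm
    subst ht
    have hσ : extLast m σ₁ = extLast m σ₂ := mul_right_cancel hEq
    have : σ₁ = σ₂ := by
      apply Equiv.ext
      intro i
      have := congrArg (fun e : Equiv.Perm (Fin (m+1)) => e (Fin.castSucc i)) hσ
      simp only [extLast_castSucc] at this
      exact Fin.castSucc_injective m this
    exact Prod.ext this rfl
  · rw [Fintype.card_prod, Fintype.card_perm, Fintype.card_perm, Fintype.card_fin,
      Fintype.card_fin, Nat.factorial_succ]
    ring


/-- total variation distance between `R_{k,n}` and `C_{k,n}`, first form. -/
theorem totalVariation_riffle_cutRiffle_eq_sum (n k : ℕ) (hn : 2 ≤ n) (hk : 1 ≤ k) :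
    (1 / 2) * ∑ π : Equiv.Perm (Fin n), |riffle k n π - cutRiffle k n π|
      = (1 / ((k : ℝ) ^ n * (n : ℝ))) * ∑ j ∈ Finset.Icc 1 (n - 1),
          (j : ℝ) * ((n : ℝ) - (j : ℝ)) * (eulerianA (n - 1) j : ℝ)
            * (Nat.choose (n + k - j - 1) (n - 1) : ℝ) := by
  classical
  obtain ⟨m, rfl⟩ : ∃ m, n = m + 1 := ⟨n - 1, by omega⟩
  have hm : 1 ≤ m := by omega
  have hK0 : (k:ℝ) ≠ 0 := by positivity
  have hm1 : ((m:ℝ)+1) ≠ 0 := by positivity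
  set H : ℕ → ℝ := fun j =>
    2 * (j:ℝ) * (((m:ℝ)+1) - (j:ℝ)) * (Nat.choose (m+1+k-j-1) m : ℝ)
      / (((m:ℝ)+1) * (k:ℝ)^(m+1)) with hH
  set F : Equiv.Perm (Fin (m+1)) → ℝ := fun π =>
    (if hasCyclicDescentAtLast (m+1) π
        then ((m+1 : ℝ) - (numCyclicDescents (m+1) π : ℝ))
        else (numCyclicDescents (m+1) π : ℝ))
      * (Nat.choose (m+1+k - numCyclicDescents (m+1) π - 1) m : ℝ)
      / (((m:ℝ)+1) * (k : ℝ) ^ (m+1)) with hF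
  -- Step 1: replace |R - C| by F
  have step1 : ∑ π : Equiv.Perm (Fin (m+1)), |riffle k (m+1) π - cutRiffle k (m+1) π|
      = ∑ π : Equiv.Perm (Fin (m+1)), F π :=
    Finset.sum_congr rfl (fun π _ => abs_diff_eq m k hm hk π)
  -- Step 2: rotation sum
  have key1 : ∀ π : Equiv.Perm (Fin (m+1)),
      ∑ t : Fin (m+1), F (π * rotP m t) = H (numCyclicDescents (m+1) π) := by
    intro π
    have hterm : ∀ t : Fin (m+1), F (π * rotP m t)
        = (if hasCyclicDescentAtLast (m+1) (π * rotP m t)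
              then ((m+1 : ℝ) - (numCyclicDescents (m+1) π : ℝ))
              else (numCyclicDescents (m+1) π : ℝ))
          * ((Nat.choose (m+1+k - numCyclicDescents (m+1) π - 1) m : ℝ)
            / (((m:ℝ)+1) * (k : ℝ) ^ (m+1))) := by
      intro t
      rw [hF]
      simp only [numCyclicDescents_rot m π t]
      rw [mul_div_assoc]
    rw [Finset.sum_congr rfl (fun t _ => hterm t), ← Finset.sum_mul,
      sum_rot_ite m π (((m:ℝ)+1) - (numCyclicDescents (m+1) π : ℝ))
        ((numCyclicDescents (m+1) π : ℝ)), hH]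
    push_cast
    ring
  -- Step 3: (m+1) * sum F = sum over π of H (cd π)
  have key2 : ((m:ℝ)+1) * (∑ π : Equiv.Perm (Fin (m+1)), F π)
      = ∑ π : Equiv.Perm (Fin (m+1)), H (numCyclicDescents (m+1) π) := by
    have swap : ∑ π : Equiv.Perm (Fin (m+1)), H (numCyclicDescents (m+1) π)
        = ∑ π : Equiv.Perm (Fin (m+1)), ∑ t : Fin (m+1), F (π * rotP m t) :=
      Finset.sum_congr rfl (fun π _ => (key1 π).symm)
    rw [swap, Finset.sum_comm]
    have inner : ∀ t : Fin (m+1),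
        ∑ π : Equiv.Perm (Fin (m+1)), F (π * rotP m t)
          = ∑ π : Equiv.Perm (Fin (m+1)), F π := by
      intro t
      exact Equiv.sum_comp (Equiv.mulRight (rotP m t)) F
    rw [Finset.sum_congr rfl (fun t _ => inner t), Finset.sum_const, Finset.card_univ,
      Fintype.card_fin, nsmul_eq_mul]
    push_cast
    ring
  -- Step 4: sum over π of H(cd π) = (m+1) * sum over σ of H(d σ + 1)
  have key3 : ∑ π : Equiv.Perm (Fin (m+1)), H (numCyclicDescents (m+1) π)
      = ((m:ℝ)+1) * ∑ σ : Equiv.Perm (Fin m), H (numDescents m σ + 1) := by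
    rw [← Function.Bijective.sum_comp (ext_rot_bijective m)
      (fun π => H (numCyclicDescents (m+1) π))]
    rw [Fintype.sum_prod_type]
    have inner : ∀ σ : Equiv.Perm (Fin m), ∀ t : Fin (m+1),
        H (numCyclicDescents (m+1) (extLast m σ * rotP m t))
          = H (numDescents m σ + 1) := by
      intro σ t
      rw [numCyclicDescents_rot, numCyclicDescents_extLast m hm σ]
    calc ∑ σ : Equiv.Perm (Fin m), ∑ t : Fin (m+1),
          H (numCyclicDescents (m+1) (extLast m σ * rotP m t))
        = ∑ σ : Equiv.Perm (Fin m), ∑ _t : Fin (m+1), H (numDescents m σ + 1) :=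
          Finset.sum_congr rfl (fun σ _ => Finset.sum_congr rfl (fun t _ => inner σ t))
      _ = ∑ σ : Equiv.Perm (Fin m), ((m:ℝ)+1) * H (numDescents m σ + 1) := by
          apply Finset.sum_congr rfl
          intro σ _
          rw [Finset.sum_const, Finset.card_univ, Fintype.card_fin, nsmul_eq_mul]
          push_cast
          ring
      _ = ((m:ℝ)+1) * ∑ σ : Equiv.Perm (Fin m), H (numDescents m σ + 1) := by
          rw [Finset.mul_sum]
  have cancel : ∑ π : Equiv.Perm (Fin (m+1)), F π
      = ∑ σ : Equiv.Perm (Fin m), H (numDescents m σ + 1) := by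
    apply mul_left_cancel₀ hm1
    rw [key2, key3]
  -- Step 5: group by number of descents
  have key4 : ∑ σ : Equiv.Perm (Fin m), H (numDescents m σ + 1)
      = ∑ j ∈ Finset.Icc 1 m, (eulerianA m j : ℝ) * H j := by
    rw [← Finset.sum_fiberwise_of_maps_to
      (g := fun σ : Equiv.Perm (Fin m) => numDescents m σ + 1)
      (t := Finset.Icc 1 m)
      (fun σ _ => by
        have := numDescents_le' m σ
        simp only [Finset.mem_Icc]
        omega)
      (fun σ => H (numDescents m σ + 1))]
    apply Finset.sum_congr rfl
    intro j hj
    rw [Finset.mem_Icc] at hj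
    have hfil : (Finset.univ.filter
          (fun σ : Equiv.Perm (Fin m) => numDescents m σ + 1 = j))
        = (Finset.univ.filter (fun σ : Equiv.Perm (Fin m) => numDescents m σ = j - 1)) := by
      apply Finset.filter_congr
      intro σ _
      constructor
      · intro h; omega
      · intro h; omega
    have : ∀ σ ∈ Finset.univ.filter
          (fun σ : Equiv.Perm (Fin m) => numDescents m σ + 1 = j),
        H (numDescents m σ + 1) = H j := by
      intro σ hσ
      rw [Finset.mem_filter] at hσ
      rw [hσ.2]
    rw [Finset.sum_congr rfl this, Finset.sum_const, hfil, eulerianA]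
    rw [nsmul_eq_mul]
  -- Final arithmetic
  rw [step1, cancel, key4, Finset.mul_sum, Finset.mul_sum]
  have hm1' : (m + 1) - 1 = m := by omega
  rw [hm1']
  apply Finset.sum_congr rfl
  intro j hj
  rw [Finset.mem_Icc] at hj
  rw [hH]
  have hcast : ((m+1 : ℕ) : ℝ) = (m:ℝ) + 1 := by push_cast; ring
  rw [hcast]
  field_simp
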